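/- Let f : X ⟶ Y be a morphism of schemes that is flat, surjective and universally open. Then for every affine scheme Z and every morphism of schemes h : Z ⟶ Y there exist a scheme Z′, a morphism p : Z′ ⟶ Z that is flat, surjective and quasi-compact, and a morphism q : Z′ ⟶ X such that f ∘ q = h ∘ p. -/

import Mathlib

open AlgebraicGeometry CategoryTheory

universe u

/-- A morphism of schemes is *flat* if all of the induced maps on stalks are flat
ring homomorphisms. -/
def SchemeHomFlat {X Y : Scheme.{u}} (f : X ⟶ Y) : Prop :=
  ∀ x, RingHom.Flat (f.stalkMap x).hom

/-- A morphism of schemes is *universally open* if every base change of it is an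
open map on underlying topological spaces. -/
def SchemeHomUniversallyOpen {X Y : Scheme.{u}} (f : X ⟶ Y) : Prop :=
  (AlgebraicGeometry.topologically @IsOpenMap).universally f

/-- Flatness as a property of ring homomorphisms. -/
abbrev FlatRH {R S : Type u} [CommRing R] [CommRing S] (f : R →+* S) : Prop := f.Flat

section RingLemmas
variable {R S : Type u} [CommRing R] [CommRing S]

lemma flat_respectsIso : RingHom.RespectsIso @FlatRH := by
  constructor
  · introv h
    haveI : f.Flat := h
    haveI : RingHom.Flat e.toRingHom := .of_bijective e.bijective
    exact RingHom.Flat.comp h (.of_bijective e.bijective)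
  · introv h
    haveI : f.Flat := h
    haveI : RingHom.Flat e.toRingHom := .of_bijective e.bijective
    exact RingHom.Flat.comp (.of_bijective e.bijective) h

lemma RingHom.Flat.algebraMap' [Algebra R S] [h : Module.Flat R S] :
    RingHom.Flat (algebraMap R S) :=
  RingHom.flat_algebraMap_iff.mpr h

lemma RingHom.Flat.toModuleFlat {f : R →+* S} (hf : f.Flat) [Algebra R S]
    (h : algebraMap R S = f) : Module.Flat R S := by
  have : f.toAlgebra = ‹Algebra R S› := Algebra.algebra_ext _ _ fun r => by
    rw [h]; rfl
  rw [← h] at hf; exact RingHom.flat_algebraMap_iff.mp hf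

lemma flat_localRingHom (φ : R →+* S) (hφ : φ.Flat) (q : Ideal S) [q.IsPrime] :
    RingHom.Flat (Localization.localRingHom (q.comap φ) q φ rfl) := by
  letI := φ.toAlgebra
  set p := q.comap φ with hp
  letI : Algebra R (Localization.AtPrime q) :=
    ((algebraMap S (Localization.AtPrime q)).comp φ).toAlgebra
  letI : SMul R (Localization.AtPrime q) := Algebra.toSMul
  letI : Module R (Localization.AtPrime q) := Algebra.toModule
  haveI : IsScalarTower R S (Localization.AtPrime q) :=
    IsScalarTower.of_algebraMap_eq' rfl
  haveI hRS : Module.Flat R S := hφ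
  haveI : Module.Flat R (Localization.AtPrime q) :=
    Module.Flat.trans R S (Localization.AtPrime q)
  letI : Algebra (Localization.AtPrime p) (Localization.AtPrime q) :=
    (Localization.localRingHom p q φ rfl).toAlgebra
  haveI : IsScalarTower R (Localization.AtPrime p) (Localization.AtPrime q) :=
    IsScalarTower.of_algebraMap_eq' (by
      ext r
      exact (Localization.localRingHom_to_map p q φ rfl r).symm)
  haveI : IsLocalizedModule p.primeCompl
      (LinearMap.id (R := R) (M := Localization.AtPrime q)) :=
    isLocalizedModule_id (S := p.primeCompl) (M := Localization.AtPrime q)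
      (R' := Localization.AtPrime p)
  haveI : Module.Flat (Localization.AtPrime p) (Localization.AtPrime q) :=
    Module.Flat.of_isLocalizedModule (Localization.AtPrime p) p.primeCompl
      (LinearMap.id (R := R) (M := Localization.AtPrime q))
  exact RingHom.flat_algebraMap_iff.mpr ‹_›

end RingLemmas

open TensorProduct in
theorem flat_of_flat_at_maximals {R S : Type u} [CommRing R] [CommRing S] [Algebra R S]
    (B : ∀ (q : Ideal S) [q.IsMaximal], Type u)
    [∀ (q : Ideal S) [q.IsMaximal], CommRing (B q)]
    [∀ (q : Ideal S) [q.IsMaximal], Algebra S (B q)]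
    [∀ (q : Ideal S) [q.IsMaximal], Algebra R (B q)]
    [∀ (q : Ideal S) [q.IsMaximal], IsScalarTower R S (B q)]
    (flat : ∀ (q : Ideal S) [q.IsMaximal], Module.Flat R (B q))
    (loc : ∀ (q : Ideal S) [q.IsMaximal], IsLocalization.AtPrime (B q) q) :
    Module.Flat R S := by
  rw [Module.Flat.iff_lTensor_injective']
  intro I
  -- the key IsLocalizedModule instance
  haveI key : ∀ (q : Ideal S) [q.IsMaximal] (N : Type u) [AddCommGroup N] [Module R N],
      IsLocalizedModule q.primeCompl
        (AlgebraTensorModule.map (Algebra.linearMap S (B q))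
          (LinearMap.id (R := R) (M := N))) := by
    intro q hq N _ _
    haveI := loc q
    rw [isLocalizedModule_iff_isBaseChange q.primeCompl (B q)]
    have e : ((AlgebraTensorModule.map (Algebra.linearMap S (B q))
          (LinearMap.id (R := R) (M := N)) : S ⊗[R] N →ₗ[S] B q ⊗[R] N)
            : S ⊗[R] N →ₗ[R] B q ⊗[R] N).comp
          (TensorProduct.mk R S N 1) = TensorProduct.mk R (B q) N 1 := by
      ext n
      simp
    refine IsBaseChange.of_comp (TensorProduct.isBaseChange R N S) ?_
    rw [e]
    exact TensorProduct.isBaseChange R N (B q)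
  -- the S-linear comparison map
  set F : S ⊗[R] I →ₗ[S] S ⊗[R] R :=
    AlgebraTensorModule.map (LinearMap.id (R := S) (M := S)) I.subtype with hF
  have hinj : Function.Injective F := by
    apply injective_of_isLocalized_maximal
      (Mₚ := fun q _ => B q ⊗[R] I)
      (f := fun q _ => AlgebraTensorModule.map (Algebra.linearMap S (B q))
        (LinearMap.id (R := R) (M := ↥I)))
      (Nₚ := fun q _ => B q ⊗[R] R)
      (g := fun q _ => AlgebraTensorModule.map (Algebra.linearMap S (B q))
        (LinearMap.id (R := R) (M := R)))
      (F := F)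
    intro q hq
    haveI := loc q
    -- identify the localized map with the base-changed inclusion
    have hmap : IsLocalizedModule.map q.primeCompl
        (AlgebraTensorModule.map (Algebra.linearMap S (B q)) (LinearMap.id (R := R) (M := ↥I)))
        (AlgebraTensorModule.map (Algebra.linearMap S (B q)) (LinearMap.id (R := R) (M := R))) F
        = (AlgebraTensorModule.map (LinearMap.id (R := B q) (M := B q)) I.subtype
            : B q ⊗[R] I →ₗ[B q] B q ⊗[R] R).restrictScalars S := by
      apply IsLocalizedModule.ext q.primeCompl
        (AlgebraTensorModule.map (Algebra.linearMap S (B q)) (LinearMap.id (R := R) (M := ↥I)))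
        (IsLocalizedModule.map_units (AlgebraTensorModule.map (Algebra.linearMap S (B q))
          (LinearMap.id (R := R) (M := R))))
      rw [IsLocalizedModule.map_comp]
      apply LinearMap.restrictScalars_injective R
      ext s i
      simp [hF]
    rw [hmap]
    have hcoe : ((AlgebraTensorModule.map (LinearMap.id (R := B q) (M := B q)) I.subtype
            : B q ⊗[R] I →ₗ[B q] B q ⊗[R] R) : B q ⊗[R] ↥I →ₗ[R] B q ⊗[R] R)
        = LinearMap.lTensor (B q) I.subtype := by
      apply TensorProduct.ext'
      intro s i
      rfl
    haveI := flat q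
    rw [LinearMap.coe_restrictScalars]
    have hcoe' : ⇑(AlgebraTensorModule.map (LinearMap.id (R := B q) (M := B q)) I.subtype
            : B q ⊗[R] I →ₗ[B q] B q ⊗[R] R) = ⇑(LinearMap.lTensor (B q) I.subtype) := by
      funext x
      exact DFunLike.congr_fun hcoe x
    rw [hcoe']
    exact Module.Flat.iff_lTensor_injective'.mp (flat q) I
  have hfun : ⇑(LinearMap.lTensor S I.subtype) = ⇑F := by
    have : (F : S ⊗[R] ↥I →ₗ[R] S ⊗[R] R) = LinearMap.lTensor S I.subtype := by
      apply TensorProduct.ext'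
      intro s i
      rfl
    rw [← this]; rfl
  rw [hfun]
  exact hinj

theorem RingHom.Flat.of_forall_maximal {R S : Type u} [CommRing R] [CommRing S] (φ : R →+* S)
    (H : ∀ (q : Ideal S) (_ : q.IsMaximal),
      RingHom.Flat ((algebraMap S (Localization.AtPrime q)).comp φ)) : φ.Flat := by
  letI alg := φ.toAlgebra
  letI iA : ∀ (q : Ideal S) [q.IsMaximal], Algebra R (Localization.AtPrime q) :=
    fun q _ => ((algebraMap S (Localization.AtPrime q)).comp φ).toAlgebra
  exact @flat_of_flat_at_maximals R S _ _ _ (fun q _ => Localization.AtPrime q)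
    (fun q _ => inferInstance) (fun q _ => inferInstance) iA
    (fun q _ => IsScalarTower.of_algebraMap_eq' rfl)
    (fun q hq => (H q hq)) (fun q _ => inferInstance)

lemma QFlat_iff {R S : Type u} [CommRing R] [CommRing S] (φ : R →+* S) :
    (∀ (p : Ideal S) (_ : p.IsPrime),
      RingHom.Flat (Localization.localRingHom (p.comap φ) p φ rfl)) ↔ φ.Flat := by
  constructor
  · intro H
    apply RingHom.Flat.of_forall_maximal
    intro q hq
    have e : (algebraMap S (Localization.AtPrime q)).comp φ
        = (Localization.localRingHom (q.comap φ) q φ rfl).comp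
            (algebraMap R (Localization.AtPrime (q.comap φ))) := by
      ext r
      exact (Localization.localRingHom_to_map (q.comap φ) q φ rfl r).symm
    rw [e]
    haveI : RingHom.Flat (Localization.localRingHom (q.comap φ) q φ rfl) :=
      H q hq.isPrime
    haveI : RingHom.Flat (algebraMap R (Localization.AtPrime (q.comap φ))) :=
      RingHom.Flat.algebraMap'
    exact RingHom.Flat.comp ‹RingHom.Flat (algebraMap _ _)› (H q hq.isPrime)
  · intro hφ p hp
    exact flat_localRingHom φ hφ p

open TensorProduct in
lemma flat_isStableUnderBaseChange : RingHom.IsStableUnderBaseChange @FlatRH := by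
  refine RingHom.IsStableUnderBaseChange.mk flat_respectsIso ?_
  introv h
  haveI : Module.Flat R T := h.toModuleFlat rfl
  have e : (Algebra.TensorProduct.includeLeftRingHom : S →+* S ⊗[R] T)
      = algebraMap S (S ⊗[R] T) := rfl
  exact RingHom.Flat.algebraMap'

/-- The induced local property of ring homomorphisms. -/
abbrev QFlatRH {R S : Type u} [CommRing R] [CommRing S] (φ : R →+* S) : Prop :=
  ∀ (p : Ideal S) (_ : p.IsPrime),
    RingHom.Flat (Localization.localRingHom (p.comap φ) p φ rfl)

lemma Q_isStableUnderBaseChange : RingHom.IsStableUnderBaseChange @QFlatRH := by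
  intro R S R' S' _ _ _ _ _ _ _ _ _ _ _ _ h
  exact (QFlat_iff _).mpr (flat_isStableUnderBaseChange R S R' S' ((QFlat_iff _).mp h))

lemma stalkwise_flat_isStableUnderBaseChange :
    (AlgebraicGeometry.stalkwise @FlatRH).IsStableUnderBaseChange := by
  haveI := AlgebraicGeometry.HasRingHomProperty.stalkwise (P := @FlatRH) flat_respectsIso
  exact HasRingHomProperty.isStableUnderBaseChange Q_isStableUnderBaseChange
theorem flat_universallyOpen_surjective_is_fpqc_covering
    {X Y : Scheme.{u}} (f : X ⟶ Y)
    (hflat : SchemeHomFlat f) (hsurj : Function.Surjective f.base)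
    (hopen : SchemeHomUniversallyOpen f)
    (Z : Scheme.{u}) [IsAffine Z] (h : Z ⟶ Y) :
    ∃ (Z' : Scheme.{u}) (p : Z' ⟶ Z) (q : Z' ⟶ X),
      SchemeHomFlat p ∧ Function.Surjective p.base ∧ QuasiCompact p ∧
        q ≫ f = p ≫ h := by
  haveI : Surjective f := ⟨hsurj⟩
  let W : Scheme.{u} := Limits.pullback h f
  let fst : W ⟶ Z := Limits.pullback.fst h f
  let snd : W ⟶ X := Limits.pullback.snd h f
  haveI hbc : (AlgebraicGeometry.stalkwise @FlatRH).IsStableUnderBaseChange :=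
    stalkwise_flat_isStableUnderBaseChange
  have hfstflat : AlgebraicGeometry.stalkwise @FlatRH fst :=
    MorphismProperty.pullback_fst h f hflat
  haveI : Surjective fst := MorphismProperty.of_isPullback (P := @Surjective) (IsPullback.of_hasPullback h f).flip inferInstance
  have hfstopen : IsOpenMap fst.base :=
    hopen snd h fst (IsPullback.of_hasPullback h f)
  classical
  choose w hw using fst.surjective
  let 𝒰 := W.affineCover
  let U : Z → W.Opens := fun z => (𝒰.f (𝒰.idx (w z))).opensRange
  have hzO : ∀ z : Z, z ∈ fst.base '' (U z) := fun z => ⟨w z, 𝒰.covers (w z), hw z⟩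
  obtain ⟨t, ht⟩ := IsCompact.elim_finite_subcover isCompact_univ
    (fun z : Z => fst.base '' (U z)) (fun z => hfstopen _ (U z).2)
    (fun z _ => Set.mem_iUnion.mpr ⟨z, hzO z⟩)
  let V : W.Opens := ⨆ z ∈ t, U z
  refine ⟨V.toScheme, V.ι ≫ fst, V.ι ≫ snd, ?_, ?_, ?_, ?_⟩
  · -- flatness
    intro x
    rw [Scheme.Hom.stalkMap_comp]
    haveI : RingHom.Flat (fst.stalkMap (V.ι.base x)).hom := hfstflat (V.ι.base x)
    have hbij : Function.Bijective (V.ι.stalkMap x).hom :=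
      (asIso (V.ι.stalkMap x)).commRingCatIsoToRingEquiv.bijective
    haveI : RingHom.Flat (V.ι.stalkMap x).hom := RingHom.Flat.of_bijective hbij
    exact RingHom.Flat.comp ‹RingHom.Flat (fst.stalkMap _).hom› ‹RingHom.Flat (V.ι.stalkMap x).hom›
  · -- surjectivity
    intro z
    have hz := ht (Set.mem_univ z)
    rw [Set.mem_iUnion₂] at hz
    obtain ⟨z', hz't, v, hvU, hv⟩ := hz
    have hvV : v ∈ V := by
      rw [TopologicalSpace.Opens.mem_iSup]
      exact ⟨z', TopologicalSpace.Opens.mem_iSup.mpr ⟨hz't, hvU⟩⟩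
    refine ⟨⟨v, hvV⟩, ?_⟩
    exact hv
  · -- quasi-compactness
    rw [quasiCompact_iff_compactSpace]
    have hc : IsCompact (V : Set W) := by
      have hVc : (V : Set W) = ⋃ z ∈ t, (U z : Set W) := by
        simp only [V, TopologicalSpace.Opens.coe_iSup]
      rw [hVc]
      refine t.finite_toSet.isCompact_biUnion fun z _ => ?_
      have : (U z : Set W) = Set.range (𝒰.f (𝒰.idx (w z))).base := rfl
      rw [this]
      exact isCompact_range (𝒰.f (𝒰.idx (w z))).base.hom.continuous
    exact isCompact_iff_compactSpace.mp hc
  · -- commutativity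
    rw [Category.assoc, Category.assoc]
    congr 1
    exact (Limits.pullback.condition).symm
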